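/- For formal distributions in the Clifford algebra A, the commutator of bilinear fermion fields satisfies [ψ(p)ψ*(q), ψ(p')ψ*(q')] = q δ(q − p') ψ(p)ψ*(q') − q' δ(q' − p) ψ(p')ψ*(q), where δ(q − p) = q^{−1} Σ_{n∈ℤ}(p/q)^n. -/
import Mathlib


/-- The commutator of bilinear fermion fields satisfies
`[ψ(p)ψ*(q), ψ(p')ψ*(q')] = q δ(q − p') ψ(p)ψ*(q') − q' δ(q' − p) ψ(p')ψ*(q)`,
interpreted coefficientwise in the formal variables `p, q, p', q'`:
taking the coefficient of `p^a q^{−b} p'^c q'^{−d}` (and noting that the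
coefficient of `p'^c q^{−b}` in `q δ(q − p') = Σ_n p'^n q^{−n}` is `δ_{bc}`,
and that of `p^a q'^{−d}` in `q' δ(q' − p)` is `δ_{ad}`), the identity reads
`[ψ_a ψ*_b, ψ_c ψ*_d] = δ_{bc} ψ_a ψ*_d − δ_{ad} ψ_c ψ*_b`. -/
theorem stmt6 {R : Type*} [Ring R]
    (ψ ψs : ℤ → R)
    (h1 : ∀ i j : ℤ, ψ i * ψs j + ψs j * ψ i = if i = j then 1 else 0)
    (h2 : ∀ i j : ℤ, ψ i * ψ j + ψ j * ψ i = 0)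
    (h3 : ∀ i j : ℤ, ψs i * ψs j + ψs j * ψs i = 0) :
    ∀ a b c d : ℤ,
      (ψ a * ψs b) * (ψ c * ψs d) - (ψ c * ψs d) * (ψ a * ψs b) =
        (if b = c then ψ a * ψs d else 0) - (if a = d then ψ c * ψs b else 0) := by
  intro a b c d
  have e1 : ψs b * ψ c = (if c = b then (1:R) else 0) - ψ c * ψs b :=
    eq_sub_of_add_eq (by rw [add_comm]; exact h1 c b)
  have e2 : ψs d * ψ a = (if a = d then (1:R) else 0) - ψ a * ψs d :=
    eq_sub_of_add_eq (by rw [add_comm]; exact h1 a d)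
  have e3 : ψ c * ψ a = - (ψ a * ψ c) :=
    eq_neg_of_add_eq_zero_left (by rw [add_comm]; exact h2 a c)
  have e4 : ψs d * ψs b = - (ψs b * ψs d) :=
    eq_neg_of_add_eq_zero_left (by rw [add_comm]; exact h3 b d)
  have L : (ψ a * ψs b) * (ψ c * ψs d) =
      ψ a * ((if c = b then (1:R) else 0) * ψs d) - ψ a * ψ c * (ψs b * ψs d) := by
    have h : (ψ a * ψs b) * (ψ c * ψs d) = ψ a * (ψs b * ψ c) * ψs d := by noncomm_ring
    rw [h, e1]; noncomm_ring
  have Rr : (ψ c * ψs d) * (ψ a * ψs b) =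
      ψ c * ((if a = d then (1:R) else 0) * ψs b) - (ψ c * ψ a) * (ψs d * ψs b) := by
    have h : (ψ c * ψs d) * (ψ a * ψs b) = ψ c * (ψs d * ψ a) * ψs b := by noncomm_ring
    rw [h, e2]; noncomm_ring
  rw [L, Rr, e3, e4]
  simp only [show (c = b) = (b = c) from propext eq_comm]
  split_ifs <;> noncomm_ring
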